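/- (Rockafellar–Uryasev) Let S be an integrable real random variable with density f and let \gamma \in (0,1). Define U(a) = a + (1-\gamma)^{-1} E[(S - a)^+]. Then U is convex on \mathbb{R}, attains its minimum at a = VaR_\gamma(S) (the \gamma-quantile of S), and the minimum value equals TVaR_\gamma(S) = E[S | S > VaR_\gamma(S)]. -/

import Mathlib

open MeasureTheory ProbabilityTheory Real

/-- Rockafellar–Uryasev: for integrable `S` with continuous strictly increasing
distribution function and `γ ∈ (0,1)`, the function
`U(a) = a + (1-γ)⁻¹ E[(S-a)⁺]` is convex, attains its minimum at `VaR_γ(S)`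
(the `γ`-quantile), and its minimum value is `TVaR_γ(S) = E[S | S > VaR_γ(S)]`. -/
theorem rockafellar_uryasev
    {Ω : Type*} [MeasurableSpace Ω] (P : Measure Ω) [IsProbabilityMeasure P]
    (S : Ω → ℝ) (hS : Measurable S) (hSint : Integrable S P)
    (γ : ℝ) (hγ : γ ∈ Set.Ioo (0 : ℝ) 1)
    (F : ℝ → ℝ) (hF : ∀ s, F s = (P {ω | S ω ≤ s}).toReal)
    (hFcont : Continuous F) (hFmono : StrictMono F)
    (VaR : ℝ) (hVaR : VaR = sInf {a : ℝ | γ ≤ F a})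
    (U : ℝ → ℝ)
    (hU : ∀ a, U a = a + (1 - γ)⁻¹ * ∫ ω, max (S ω - a) 0 ∂P) :
    ConvexOn ℝ Set.univ U ∧
      (∀ a : ℝ, U VaR ≤ U a) ∧
      U VaR = ∫ ω, S ω ∂(P[|{ω | VaR < S ω}]) := by
  have hc : (0:ℝ) < 1 - γ := by linarith [hγ.2]
  have hcinv : (0:ℝ) < (1 - γ)⁻¹ := inv_pos.mpr hc
  have hci : (1 - γ)⁻¹ * (1 - γ) = 1 := inv_mul_cancel₀ hc.ne'
  have hInt : ∀ a : ℝ, Integrable (fun ω => max (S ω - a) 0) P :=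
    fun a => (hSint.sub (integrable_const a)).pos_part
  -- F VaR = γ
  have hFVaR : F VaR = γ := by
    have hmap : IsProbabilityMeasure (P.map S) := Measure.isProbabilityMeasure_map hS.aemeasurable
    have hFc : F = cdf (P.map S) := by
      funext s
      rw [hF, cdf_eq_real, measureReal_def, Measure.map_apply hS measurableSet_Iic]
      rfl
    have h1 : ∃ x1, γ ≤ F x1 := by
      have := (tendsto_cdf_atTop (P.map S)).eventually_const_lt hγ.2
      rcases this.exists with ⟨x, hx⟩
      exact ⟨x, le_of_lt (by rwa [hFc])⟩
    have h0 : ∃ x0, F x0 < γ := by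
      have := (tendsto_cdf_atBot (P.map S)).eventually_lt_const hγ.1
      rcases this.exists with ⟨x, hx⟩
      exact ⟨x, by rwa [hFc]⟩
    obtain ⟨x1, hx1⟩ := h1
    obtain ⟨x0, hx0⟩ := h0
    have hlt : x0 ≤ x1 := le_of_lt (hFmono.lt_iff_lt.mp (lt_of_lt_of_le hx0 hx1))
    obtain ⟨x, hxmem, hxeq⟩ := intermediate_value_Icc hlt hFcont.continuousOn
        (Set.mem_Icc.mpr ⟨le_of_lt hx0, hx1⟩)
    have hlb : ∀ y ∈ {a : ℝ | γ ≤ F a}, x ≤ y := by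
      intro y hy
      by_contra hcc
      push_neg at hcc
      exact absurd (hxeq ▸ hFmono hcc) (not_lt.mpr hy)
    have : VaR = x := by
      rw [hVaR]
      exact le_antisymm (csInf_le ⟨x, hlb⟩ (by simp [hxeq])) (le_csInf ⟨x, by simp [hxeq]⟩ hlb)
    rw [this, hxeq]
  set A : Set Ω := {ω | VaR < S ω} with hAdef
  have hAmeas : MeasurableSet A := hS measurableSet_Ioi
  have hPA : (P A).toReal = 1 - γ := by
    have hcompl : A = {ω | S ω ≤ VaR}ᶜ := by
      ext ω; simp [hAdef, not_le]
    have hmeas : MeasurableSet {ω | S ω ≤ VaR} := hS measurableSet_Iic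
    rw [hcompl, measure_compl hmeas (measure_ne_top P _), measure_univ,
      ENNReal.toReal_sub_of_le prob_le_one ENNReal.one_ne_top, ENNReal.toReal_one,
      ← hF VaR, hFVaR]
  have hPAne : P A ≠ ⊤ := measure_ne_top P A
  -- convexity
  have hgconv : ∀ x y t s : ℝ, 0 ≤ t → 0 ≤ s → t + s = 1 →
      (∫ ω, max (S ω - (t * x + s * y)) 0 ∂P) ≤
        t * (∫ ω, max (S ω - x) 0 ∂P) + s * (∫ ω, max (S ω - y) 0 ∂P) := by
    intro x y t s ht hs hts
    have hpt : ∀ ω, max (S ω - (t * x + s * y)) 0 ≤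
        t * max (S ω - x) 0 + s * max (S ω - y) 0 := by
      intro ω
      have h1 : S ω - (t * x + s * y) = t * (S ω - x) + s * (S ω - y) := by
        linear_combination (-(S ω)) * hts
      rw [h1]
      refine max_le (add_le_add (mul_le_mul_of_nonneg_left (le_max_left _ _) ht)
        (mul_le_mul_of_nonneg_left (le_max_left _ _) hs)) ?_
      have := mul_nonneg ht (le_max_right (S ω - x) 0)
      have := mul_nonneg hs (le_max_right (S ω - y) 0)
      linarith
    calc (∫ ω, max (S ω - (t * x + s * y)) 0 ∂P)
        ≤ ∫ ω, t * max (S ω - x) 0 + s * max (S ω - y) 0 ∂P :=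
          integral_mono (hInt _) (((hInt x).const_mul t).add ((hInt y).const_mul s)) hpt
      _ = t * (∫ ω, max (S ω - x) 0 ∂P) + s * (∫ ω, max (S ω - y) 0 ∂P) := by
          rw [integral_add ((hInt x).const_mul t) ((hInt y).const_mul s),
            integral_const_mul, integral_const_mul]
  have hconv : ConvexOn ℝ Set.univ U := by
    refine ⟨convex_univ, ?_⟩
    intro x _ y _ t s ht hs hts
    simp only [smul_eq_mul, hU]
    have := hgconv x y t s ht hs hts
    nlinarith [this, hcinv.le]
  -- the two key estimates
  have key1 : ∀ b, VaR ≤ b →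
      (∫ ω, max (S ω - VaR) 0 ∂P) ≤ (∫ ω, max (S ω - b) 0 ∂P) + (b - VaR) * (1 - γ) := by
    intro b hb
    have hindInt : Integrable (A.indicator fun _ => b - VaR) P :=
      (integrable_const (b - VaR)).indicator hAmeas
    have hpt : ∀ ω, max (S ω - VaR) 0 ≤
        max (S ω - b) 0 + A.indicator (fun _ => b - VaR) ω := by
      intro ω
      by_cases h : VaR < S ω
      · rw [Set.indicator_of_mem (show ω ∈ A from h)]
        refine max_le ?_ ?_
        · have := le_max_left (S ω - b) 0; linarith
        · have := le_max_right (S ω - b) 0; linarith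
      · rw [Set.indicator_of_notMem (show ω ∉ A from h)]
        have hle : S ω ≤ VaR := not_lt.mp h
        rw [max_eq_right (by linarith), add_zero]
        exact le_max_right _ _
    calc (∫ ω, max (S ω - VaR) 0 ∂P)
        ≤ ∫ ω, max (S ω - b) 0 + A.indicator (fun _ => b - VaR) ω ∂P :=
          integral_mono (hInt _) ((hInt b).add hindInt) hpt
      _ = (∫ ω, max (S ω - b) 0 ∂P) + (b - VaR) * (1 - γ) := by
          rw [integral_add (hInt b) hindInt, integral_indicator_const _ hAmeas,
            smul_eq_mul, measureReal_def, hPA]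
          ring
  have key2 : ∀ a, a ≤ VaR →
      (∫ ω, max (S ω - VaR) 0 ∂P) + (VaR - a) * (1 - γ) ≤ (∫ ω, max (S ω - a) 0 ∂P) := by
    intro a ha
    have hindInt : Integrable (A.indicator fun _ => VaR - a) P :=
      (integrable_const (VaR - a)).indicator hAmeas
    have hpt : ∀ ω, max (S ω - VaR) 0 + A.indicator (fun _ => VaR - a) ω ≤
        max (S ω - a) 0 := by
      intro ω
      by_cases h : VaR < S ω
      · rw [Set.indicator_of_mem (show ω ∈ A from h), max_eq_left (by linarith),
          max_eq_left (by linarith)]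
        linarith
      · rw [Set.indicator_of_notMem (show ω ∉ A from h), add_zero]
        have hle : S ω ≤ VaR := not_lt.mp h
        rw [max_eq_right (by linarith)]
        exact le_max_right _ _
    calc (∫ ω, max (S ω - VaR) 0 ∂P) + (VaR - a) * (1 - γ)
        = ∫ ω, max (S ω - VaR) 0 + A.indicator (fun _ => VaR - a) ω ∂P := by
          rw [integral_add (hInt VaR) hindInt, integral_indicator_const _ hAmeas,
            smul_eq_mul, measureReal_def, hPA]
          ring
      _ ≤ ∫ ω, max (S ω - a) 0 ∂P :=
          integral_mono ((hInt VaR).add hindInt) (hInt a) hpt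
  have hmin : ∀ a : ℝ, U VaR ≤ U a := by
    intro a
    rcases le_total VaR a with h | h
    · have := key1 a h
      rw [hU a, hU VaR]
      nlinarith [this, hcinv.le]
    · have := key2 a h
      rw [hU a, hU VaR]
      nlinarith [this, hcinv.le]
  refine ⟨hconv, hmin, ?_⟩
  -- value
  have hind : (fun ω => max (S ω - VaR) 0) = A.indicator (fun ω => S ω - VaR) := by
    funext ω
    by_cases h : VaR < S ω
    · rw [Set.indicator_of_mem (show ω ∈ A from h), max_eq_left (by linarith)]
    · rw [Set.indicator_of_notMem (show ω ∉ A from h), max_eq_right (by linarith [not_lt.mp h])]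
  have hintA : IntegrableOn S A P := hSint.integrableOn
  have hI : (∫ ω, max (S ω - VaR) 0 ∂P) = (∫ ω in A, S ω ∂P) - VaR * (1 - γ) := by
    rw [hind, integral_indicator hAmeas, integral_sub hintA (integrableOn_const (measure_ne_top P A)), setIntegral_const, smul_eq_mul, measureReal_def, hPA, mul_comm]
  have hRHS : (∫ ω, S ω ∂(P[|A])) = (1 - γ)⁻¹ * ∫ ω in A, S ω ∂P := by
    rw [ProbabilityTheory.cond, integral_smul_measure, ENNReal.toReal_inv, hPA, smul_eq_mul]
  rw [hU VaR, hI, hRHS]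
  field_simp
  ring
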